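/- Let X be a normal projective variety and M a Q-Cartier Q-divisor. Suppose there is an infinite set S of positive integers and effective integral Weil divisors N_m (m ∈ S), all supported on a common reduced divisor, such that N_p - N_q ∼_Q (p - q)M for all p, q ∈ S. Then κ(X, M) ≥ 0. -/

import Mathlib

theorem kappa_nonneg_of_infinite_family {V : Type*} [AddCommGroup V] [Module ℚ V]
    (P : Submodule ℚ V) (Eff : V → Prop)
    {r : ℕ} (hr : 0 < r)
    (ι : (Fin r → ℚ) →ₗ[ℚ] V)
    (hι : ∀ v : Fin r → ℚ, (∀ i, 0 ≤ v i) → Eff (ι v))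
    (M : V) (S : Set ℕ) (hS : S.Infinite)
    (N : ℕ → Fin r → ℕ)
    (hrel : ∀ p ∈ S, ∀ q ∈ S,
      (ι (fun i => (N p i : ℚ)) - ι (fun i => (N q i : ℚ)))
        - (((p : ℚ) - (q : ℚ)) • M) ∈ P) :
    ∃ c : ℚ, 0 < c ∧ ∃ E : V, Eff E ∧ c • M - E ∈ P := by
  classical
  haveI : Infinite S := hS.to_subtype
  set f : ℕ → ℕ := ⇑(Nat.orderEmbeddingOfSet S)
  have hfS : ∀ n, f n ∈ S := fun n => by
    simp [f, Nat.orderEmbeddingOfSet_apply]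
  have hmono : StrictMono f := (Nat.orderEmbeddingOfSet S).strictMono
  have hpwo : Set.IsPWO (Set.univ : Set (Fin r → ℕ)) := Set.isPWO_of_wellQuasiOrderedLE _
  obtain ⟨m, n, hmn, hle⟩ := hpwo (fun k => ⟨N (f k), Set.mem_univ _⟩)
  set p := f m
  set q := f n
  have hpq : p < q := hmono hmn
  refine ⟨(q : ℚ) - p, sub_pos.mpr (by exact_mod_cast hpq), ?_⟩
  refine ⟨ι (fun i => (N q i : ℚ) - (N p i : ℚ)), hι _ fun i => by
    have := hle i; simp only [sub_nonneg]; exact_mod_cast this, ?_⟩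
  have h := hrel p (hfS m) q (hfS n)
  have hneg := P.neg_mem h
  have : ι (fun i => (N q i : ℚ) - (N p i : ℚ))
      = ι (fun i => (N q i : ℚ)) - ι (fun i => (N p i : ℚ)) := by
    rw [← map_sub]; rfl
  rw [this]
  convert h using 1
  module
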